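/- For every natural number n ≥ 9, the Bob-start game chromatic number of the 4×n grid graph is exactly 4: χ_g^B(P_4 □ P_n) = 4. -/

import Mathlib

set_option linter.unusedSectionVars false


open SimpleGraph

/-- A move coloring vertex `v` with color `col` is valid for the partial coloring `c`
if `v` is uncolored and no neighbor of `v` already has color `col`. -/
def validMove {V : Type*} (G : SimpleGraph V) {k : ℕ} (c : V → Option (Fin k))
    (v : V) (col : Fin k) : Prop :=
  c v = none ∧ ∀ u, G.Adj u v → c u ≠ some col

/-- All vertices are colored. -/
def allColored {V : Type*} {k : ℕ} (c : V → Option (Fin k)) : Prop :=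
  ∀ v, c v ≠ none

/-- `AliceWins G k turn c` : starting from the partial proper coloring `c` of `G`,
with `turn = true` meaning that it is Alice's move (`turn = false` : Bob's move),
Alice can force the `k`-coloring game to end with every vertex colored. -/
inductive AliceWins {V : Type*} [DecidableEq V] (G : SimpleGraph V) (k : ℕ) :
    Bool → (V → Option (Fin k)) → Prop
  | finished (turn : Bool) (c : V → Option (Fin k)) (h : allColored c) :
      AliceWins G k turn c
  | aliceMove (c : V → Option (Fin k)) (v : V) (col : Fin k)
      (hm : validMove G c v col)
      (h : AliceWins G k false (Function.update c v (some col))) :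
      AliceWins G k true c
  | bobTurn (c : V → Option (Fin k))
      (hne : ∃ v col, validMove G c v col)
      (h : ∀ v col, validMove G c v col →
        AliceWins G k true (Function.update c v (some col))) :
      AliceWins G k false c

/-- `BobWins G k turn c` : starting from the partial proper coloring `c` of `G`,
with `turn = true` meaning that it is Alice's move (`turn = false` : Bob's move),
Bob can force the `k`-coloring game to end with some vertex left uncolored. -/
inductive BobWins {V : Type*} [DecidableEq V] (G : SimpleGraph V) (k : ℕ) :
    Bool → (V → Option (Fin k)) → Prop
  | aliceTurn (c : V → Option (Fin k)) (h0 : ¬ allColored c)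
      (h : ∀ v col, validMove G c v col →
        BobWins G k false (Function.update c v (some col))) :
      BobWins G k true c
  | bobMove (c : V → Option (Fin k)) (v : V) (col : Fin k)
      (hm : validMove G c v col)
      (h : BobWins G k true (Function.update c v (some col))) :
      BobWins G k false c
  | bobStuck (c : V → Option (Fin k)) (h0 : ¬ allColored c)
      (h : ∀ v col, ¬ validMove G c v col) :
      BobWins G k false c

section Prelim
variable {V : Type*} [DecidableEq V] {G : SimpleGraph V} {k : ℕ}

theorem BobWins.not_aliceWins {t : Bool} {c : V → Option (Fin k)}
    (hb : BobWins G k t c) (ha : AliceWins G k t c) : False := by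
  induction hb with
  | aliceTurn c h0 h ih =>
    cases ha with
    | finished _ _ hall => exact h0 hall
    | aliceMove _ v col hm ha' => exact ih v col hm ha'
  | bobMove c v col hm h ih =>
    cases ha with
    | finished _ _ hall => exact hall v hm.1
    | bobTurn _ hne h' => exact ih (h' v col hm)
  | bobStuck c h0 h =>
    cases ha with
    | finished _ _ hall => exact h0 hall
    | bobTurn _ hne h' => obtain ⟨v, col, hv⟩ := hne; exact h v col hv

variable [Fintype V]

/-- number of uncolored vertices -/
def uncard (c : V → Option (Fin k)) : ℕ :=
  (Finset.univ.filter (fun x => c x = none)).card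

theorem uncard_update {c : V → Option (Fin k)} {v : V} (hv : c v = none) (col : Fin k) :
    uncard (Function.update c v (some col)) = uncard c - 1 := by
  unfold uncard
  have : (Finset.univ.filter (fun x => Function.update c v (some col) x = none))
      = (Finset.univ.filter (fun x => c x = none)).erase v := by
    ext x
    rcases eq_or_ne x v with rfl | hx
    · simp [Function.update_self]
    · simp [Function.update_of_ne hx, hx]
  rw [this, Finset.card_erase_of_mem (by simp [hv])]

theorem uncard_pos {c : V → Option (Fin k)} {v : V} (hv : c v = none) : 0 < uncard c := by
  refine Finset.card_pos.2 ⟨v, by simp [uncard, hv]⟩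

/-- If some uncolored vertex has all colors in its neighborhood, Bob wins. -/
theorem bobWins_of_dead :
    ∀ (N : ℕ) (t : Bool) (c : V → Option (Fin k)), uncard c ≤ N →
    ∀ u : V, c u = none → (∀ col : Fin k, ∃ w, G.Adj w u ∧ c w = some col) →
    BobWins G k t c := by
  intro N
  induction N with
  | zero =>
    intro t c hN u hu _
    have := uncard_pos hu; omega
  | succ N ih =>
    intro t c hN u hu hdead
    have h0 : ¬ allColored c := fun h => h u hu
    have hpres : ∀ v col, validMove G c v col →
        (Function.update c v (some col)) u = none ∧
        (∀ col' : Fin k, ∃ w, G.Adj w u ∧ (Function.update c v (some col)) w = some col') := by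
      intro v col hm
      have hvu : v ≠ u := by
        rintro rfl
        obtain ⟨w, hw, hcw⟩ := hdead col
        exact hm.2 w hw hcw
      refine ⟨by rw [Function.update_of_ne (Ne.symm hvu)]; exact hu, ?_⟩
      intro col'
      obtain ⟨w, hw, hcw⟩ := hdead col'
      have hwv : w ≠ v := by rintro rfl; rw [hm.1] at hcw; exact nomatch hcw
      exact ⟨w, hw, by rw [Function.update_of_ne hwv]; exact hcw⟩
    have hcard : ∀ v col, validMove G c v col →
        uncard (Function.update c v (some col)) ≤ N := by
      intro v col hm
      rw [uncard_update hm.1]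
      omega
    cases t with
    | true =>
      refine BobWins.aliceTurn c h0 (fun v col hm => ?_)
      obtain ⟨h1, h2⟩ := hpres v col hm
      exact ih false _ (hcard v col hm) u h1 h2
    | false =>
      by_cases hex : ∃ v col, validMove G c v col
      · obtain ⟨v, col, hm⟩ := hex
        obtain ⟨h1, h2⟩ := hpres v col hm
        exact BobWins.bobMove c v col hm (ih true _ (hcard v col hm) u h1 h2)
      · push_neg at hex
        exact BobWins.bobStuck c h0 hex

end Prelim
section Mirror

instance pathGraph.adjDecidable (m : ℕ) : DecidableRel (pathGraph m).Adj :=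
  fun _ _ => decidable_of_iff' _ pathGraph_adj

instance gridAdjDecidable (m n : ℕ) : DecidableRel (pathGraph m □ pathGraph n).Adj :=
  fun _ _ => decidable_of_iff' _ boxProd_adj

variable {n : ℕ}

/-- the color involution -/
def tau : Fin 4 → Fin 4 := ![1, 0, 3, 2]

theorem tau_tau : ∀ a, tau (tau a) = a := by decide
theorem tau_ne : ∀ a, tau a ≠ a := by decide
theorem tau_inj : ∀ a b, tau a = tau b → a = b := by decide

/-- the mirror automorphism -/
def sig (p : Fin 4 × Fin n) : Fin 4 × Fin n := (p.1.rev, p.2)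

theorem sig_sig (p : Fin 4 × Fin n) : sig (sig p) = p := by
  simp [sig, Fin.rev_rev]

theorem sig_ne (p : Fin 4 × Fin n) : sig p ≠ p := by
  have : ∀ a : Fin 4, a.rev ≠ a := by decide
  intro h
  exact this p.1 (congrArg Prod.fst h)

theorem rev_adj : ∀ a b : Fin 4, (pathGraph 4).Adj a.rev b.rev ↔ (pathGraph 4).Adj a b := by
  decide

theorem sig_adj {u v : Fin 4 × Fin n} :
    (pathGraph 4 □ pathGraph n).Adj (sig u) (sig v) ↔ (pathGraph 4 □ pathGraph n).Adj u v := by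
  simp only [boxProd_adj, sig]
  constructor
  · rintro (⟨h1, h2⟩ | ⟨h1, h2⟩)
    · exact Or.inl ⟨(rev_adj _ _).1 h1, h2⟩
    · exact Or.inr ⟨h1, Fin.rev_injective h2⟩
  · rintro (⟨h1, h2⟩ | ⟨h1, h2⟩)
    · exact Or.inl ⟨(rev_adj _ _).2 h1, h2⟩
    · exact Or.inr ⟨h1, by rw [h2]⟩

theorem vert_unique : ∀ a b b' : Fin 4, ¬ (pathGraph 4).Adj a.rev a →
    (pathGraph 4).Adj a b → (pathGraph 4).Adj a b' → b = b' := by decide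
theorem colored_nbrs_le {n k : ℕ} (c : Fin 4 × Fin n → Option (Fin k))
    (v : Fin 4 × Fin n) (hpartner : c (sig v) = none) :
    (((pathGraph 4 □ pathGraph n).neighborFinset v).filter (fun u => c u ≠ none)).card ≤ 3 := by
  set G := pathGraph 4 □ pathGraph n with hG
  have hadjchar : ∀ u ∈ G.neighborFinset v,
      ((pathGraph 4).Adj v.1 u.1 ∧ v.2 = u.2) ∨ ((pathGraph n).Adj v.2 u.2 ∧ v.1 = u.1) := by
    intro u hu
    exact boxProd_adj.1 ((SimpleGraph.mem_neighborFinset _ _ _).1 hu)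
  have key : ∀ u ∈ G.neighborFinset v, ∀ u' ∈ G.neighborFinset v,
      (u.1 = v.1 ↔ u'.1 = v.1) → ((u.1.val < v.1.val ∨ u.2.val < v.2.val) ↔
        (u'.1.val < v.1.val ∨ u'.2.val < v.2.val)) → u = u' := by
    intro u hu u' hu' he1 he2
    rcases hadjchar u hu with ⟨ha, hb⟩ | ⟨ha, hb⟩ <;>
      rcases hadjchar u' hu' with ⟨ha', hb'⟩ | ⟨ha', hb'⟩
    · have h1 := pathGraph_adj.1 ha
      have h2 := pathGraph_adj.1 ha'
      refine Prod.ext (Fin.ext ?_) (Fin.ext ?_)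
      · rw [← hb, ← hb'] at he2; simp only [lt_irrefl, or_false] at he2; omega
      · rw [← hb, ← hb']
    · exact absurd (he1.2 hb'.symm) (fun hh => (pathGraph 4).loopless.irrefl v.1 (hh ▸ ha))
    · exact absurd (he1.1 hb.symm) (fun hh => (pathGraph 4).loopless.irrefl v.1 (hh ▸ ha'))
    · have h1 := pathGraph_adj.1 ha
      have h2 := pathGraph_adj.1 ha'
      refine Prod.ext (Fin.ext ?_) (Fin.ext ?_)
      · rw [← hb, ← hb']
      · rw [← hb', ← hb] at he2; simp only [lt_irrefl, false_or] at he2; omega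
  by_cases hrev : (pathGraph 4).Adj v.1.rev v.1
  · have hmem : sig v ∈ G.neighborFinset v := by
      rw [SimpleGraph.mem_neighborFinset]
      exact boxProd_adj.2 (Or.inl ⟨hrev.symm, rfl⟩)
    have hsub : (G.neighborFinset v).filter (fun u => c u ≠ none)
        ⊆ (G.neighborFinset v).erase (sig v) := by
      intro x hx
      rw [Finset.mem_filter] at hx
      refine Finset.mem_erase.2 ⟨?_, hx.1⟩
      rintro rfl
      exact hx.2 hpartner
    have hcard4 : (G.neighborFinset v).card ≤ 4 := by
      have := Finset.card_le_card_of_injOn (s := G.neighborFinset v) (t := (Finset.univ : Finset (Bool × Bool)))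
        (fun u => (decide (u.1 = v.1), decide (u.1.val < v.1.val ∨ u.2.val < v.2.val)))
        (fun a _ => Finset.mem_univ _) ?_
      · simpa using this
      · intro u hu u' hu' he
        simp only [Prod.mk.injEq, decide_eq_decide] at he
        exact key u hu u' hu' he.1 he.2
    calc _ ≤ ((G.neighborFinset v).erase (sig v)).card := Finset.card_le_card hsub
      _ = (G.neighborFinset v).card - 1 := Finset.card_erase_of_mem hmem
      _ ≤ 3 := by omega
  · have hcard3 : (G.neighborFinset v).card ≤ 3 := by
      have := Finset.card_le_card_of_injOn (s := G.neighborFinset v) (t := ({(true, true), (true, false)} ∪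
          Finset.univ.filter (fun p : Bool × Bool => p.1 = false ∧
            ∃ u : Fin 4 × Fin n, u ∈ G.neighborFinset v ∧ u.1 ≠ v.1 ∧
              p.2 = decide (u.1.val < v.1.val ∨ u.2.val < v.2.val))))
        (fun u => (decide (u.1 = v.1), decide (u.1.val < v.1.val ∨ u.2.val < v.2.val)))
        ?_ ?_
      · refine this.trans ?_
        refine (Finset.card_union_le _ _).trans ?_
        have h2 : ({(true, true), (true, false)} : Finset (Bool × Bool)).card ≤ 2 :=
          Finset.card_insert_le _ _ |>.trans (by simp)
        have h1 : (Finset.univ.filter (fun p : Bool × Bool => p.1 = false ∧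
            ∃ u : Fin 4 × Fin n, u ∈ G.neighborFinset v ∧ u.1 ≠ v.1 ∧
              p.2 = decide (u.1.val < v.1.val ∨ u.2.val < v.2.val))).card ≤ 1 := by
          refine Finset.card_le_one.2 ?_
          rintro p hp q hq
          simp only [Finset.mem_filter] at hp hq
          obtain ⟨-, hp1, u, hu, hu1, hp2⟩ := hp
          obtain ⟨-, hq1, u', hu', hu1', hq2⟩ := hq
          have : u = u' := by
            rcases hadjchar u hu with ⟨ha, hb⟩ | ⟨ha, hb⟩
            · rcases hadjchar u' hu' with ⟨ha', hb'⟩ | ⟨ha', hb'⟩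
              · exact Prod.ext (vert_unique v.1 u.1 u'.1 hrev ha ha') (Fin.ext (by rw [← hb, ← hb']))
              · exact absurd hb'.symm hu1'
            · exact absurd hb.symm hu1
          refine Prod.ext (hp1.trans hq1.symm) (hp2.trans (this ▸ hq2.symm))
        omega
      · intro u hu
        by_cases h1 : u.1 = v.1
        · simp only [Finset.mem_union, Finset.mem_insert, Finset.mem_singleton]
          by_cases h2 : u.1.val < v.1.val ∨ u.2.val < v.2.val
          · have hd : decide (u.1.val < v.1.val ∨ u.2.val < v.2.val) = true := decide_eq_true h2
            rw [decide_eq_true h1, hd]; simp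
          · have hd : decide (u.1.val < v.1.val ∨ u.2.val < v.2.val) = false := decide_eq_false h2
            rw [decide_eq_true h1, hd]; simp
        · refine Finset.mem_union_right _ ?_
          simp only [Finset.mem_filter, Finset.mem_univ, true_and]
          exact ⟨by simp [h1], u, hu, h1, rfl⟩
      · intro u hu u' hu' he
        simp only [Prod.mk.injEq, decide_eq_decide] at he
        exact key u hu u' hu' he.1 he.2
    calc _ ≤ (G.neighborFinset v).card := Finset.card_le_card (Finset.filter_subset _ _)
      _ ≤ 3 := hcard3
end Mirror
section Mirror2

variable {n : ℕ}

theorem exists_free_of_card {W : Type*} [DecidableEq W] (G : SimpleGraph W)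
    {k : ℕ} (c : W → Option (Fin k)) (v : W) (hv : c v = none)
    (T : Finset W) (hT : ∀ u, G.Adj u v → c u ≠ none → u ∈ T) (hcard : T.card < k) :
    ∃ col : Fin k, validMove G c v col := by
  by_contra h
  push_neg at h
  have h' : ∀ col : Fin k, ∃ u, G.Adj u v ∧ c u = some col := by
    intro col
    have := h col
    unfold validMove at this
    rw [not_and] at this
    have := this hv
    push_neg at this
    obtain ⟨u, hu1, hu2⟩ := this
    exact ⟨u, hu1, hu2⟩
  choose f hf using h'
  have hinj : ∀ a b, f a = f b → a = b := by
    intro a b hab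
    have h1 := (hf a).2
    rw [hab, (hf b).2] at h1
    exact (Option.some_inj.1 h1).symm
  have hmem : ∀ col : Fin k, f col ∈ T := by
    intro col
    exact hT _ (hf col).1 (by rw [(hf col).2]; exact fun h => nomatch h)
  have := Finset.card_le_card_of_injOn (s := (Finset.univ : Finset (Fin k))) f
    (fun a _ => hmem a) (fun a _ b _ => hinj a b)
  simp only [Finset.card_univ, Fintype.card_fin] at this
  omega

/-- Alice's mirror reply is legal. -/
theorem mirror_reply_valid (c : Fin 4 × Fin n → Option (Fin 4))
    (hsym : ∀ x, c (sig x) = (c x).map tau) (v : Fin 4 × Fin n) (col : Fin 4)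
    (hm : validMove (pathGraph 4 □ pathGraph n) c v col) :
    validMove (pathGraph 4 □ pathGraph n) (Function.update c v (some col)) (sig v) (tau col) := by
  constructor
  · rw [Function.update_of_ne (sig_ne v), hsym v, hm.1]
    rfl
  · intro u hu hc
    have hu' : (pathGraph 4 □ pathGraph n).Adj (sig u) v := by
      have := sig_adj (u := u) (v := sig v)
      rw [sig_sig] at this
      exact this.2 hu
    rcases eq_or_ne u v with rfl | huv
    · rw [Function.update_self] at hc
      exact tau_ne col (Option.some_inj.1 hc).symm
    · rw [Function.update_of_ne huv] at hc
      have hcu : c u = (c (sig u)).map tau := by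
        have := hsym (sig u)
        rw [sig_sig] at this
        exact this
      rw [hcu] at hc
      cases hcs : c (sig u) with
      | none => rw [hcs] at hc; simp at hc
      | some d =>
        rw [hcs] at hc
        have : tau d = tau col := Option.some_inj.1 hc
        exact hm.2 (sig u) hu' (by rw [hcs, tau_inj d col this])

/-- the mirror invariant is preserved -/
theorem mirror_invariant (c : Fin 4 × Fin n → Option (Fin 4))
    (hsym : ∀ x, c (sig x) = (c x).map tau) (v : Fin 4 × Fin n) (col : Fin 4) :
    ∀ x, (Function.update (Function.update c v (some col)) (sig v) (some (tau col))) (sig x)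
      = ((Function.update (Function.update c v (some col)) (sig v) (some (tau col))) x).map tau := by
  intro x
  rcases eq_or_ne x v with rfl | hxv
  · rw [Function.update_self, Function.update_of_ne (Ne.symm (sig_ne x)), Function.update_self]
    rfl
  · rcases eq_or_ne x (sig v) with rfl | hxs
    · rw [sig_sig, Function.update_self, Function.update_of_ne (Ne.symm (sig_ne v)),
        Function.update_self]
      simp [tau_tau]
    · have h1 : sig x ≠ sig v := fun h => hxv (by rw [← sig_sig x, h, sig_sig])
      have h2 : sig x ≠ v := fun h => hxs (by rw [← sig_sig x, h])
      rw [Function.update_of_ne h1, Function.update_of_ne h2,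
        Function.update_of_ne hxs, Function.update_of_ne hxv]
      exact hsym x

theorem mirror_main : ∀ (N : ℕ) (c : Fin 4 × Fin n → Option (Fin 4)),
    uncard c ≤ N → (∀ x, c (sig x) = (c x).map tau) →
    AliceWins (pathGraph 4 □ pathGraph n) 4 false c := by
  intro N
  induction N with
  | zero =>
    intro c hN _
    refine AliceWins.finished _ _ (fun v hv => ?_)
    have := uncard_pos hv
    omega
  | succ N ih =>
    intro c hN hsym
    by_cases hall : allColored c
    · exact AliceWins.finished _ _ hall
    · have hex : ∃ v, c v = none := by
        by_contra h
        push_neg at h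
        exact hall (fun v => h v)
      obtain ⟨v0, hv0⟩ := hex
      have hfree : ∀ v : Fin 4 × Fin n, c v = none →
          ∃ col, validMove (pathGraph 4 □ pathGraph n) c v col := by
        intro v hv
        have hpartner : c (sig v) = none := by rw [hsym v, hv]; rfl
        refine exists_free_of_card _ c v hv
          (((pathGraph 4 □ pathGraph n).neighborFinset v).filter (fun u => c u ≠ none))
          (fun u hadj hc => ?_) ((colored_nbrs_le c v hpartner).trans_lt (by norm_num))
        rw [Finset.mem_filter, SimpleGraph.mem_neighborFinset]
        exact ⟨hadj.symm, hc⟩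
      refine AliceWins.bobTurn c ⟨v0, hfree v0 hv0⟩ (fun v col hm => ?_)
      refine AliceWins.aliceMove _ (sig v) (tau col) (mirror_reply_valid c hsym v col hm) ?_
      refine ih _ ?_ (mirror_invariant c hsym v col)
      have h1 : uncard (Function.update c v (some col)) = uncard c - 1 :=
        uncard_update hm.1 col
      have h2 : (Function.update c v (some col)) (sig v) = none := by
        rw [Function.update_of_ne (sig_ne v), hsym v, hm.1]; rfl
      have h3 := uncard_update h2 (tau col)
      have h4 := uncard_pos hm.1
      omega

theorem aliceWins_four : AliceWins (pathGraph 4 □ pathGraph n) 4 false (fun _ => none) :=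
  mirror_main (Fintype.card (Fin 4 × Fin n)) _ (by
    unfold uncard
    simpa using Finset.card_le_univ _) (fun _ => rfl)

end Mirror2
section Window

/-- digit `i` of the base-4 encoded window state -/
def wget (s i : ℕ) : ℕ := s / 4 ^ i % 4

/-- place value `c` at digit `i` (assumed empty) -/
def wapp (s i c : ℕ) : ℕ := s + c * 4 ^ i

theorem digit_add {s c : ℕ} (i j : ℕ) (h0 : s / 4 ^ i % 4 = 0) (hc : c < 4) :
    (s + c * 4 ^ i) / 4 ^ j % 4 = if j = i then c else s / 4 ^ j % 4 := by
  rcases lt_trichotomy j i with hji | rfl | hij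
  · rw [if_neg (by omega)]
    obtain ⟨d, rfl⟩ : ∃ d, i = j + 1 + d := ⟨i - j - 1, by omega⟩
    have h4 : (0:ℕ) < 4 ^ j := pow_pos (by norm_num) j
    have he : c * 4 ^ (j + 1 + d) = 4 ^ j * (c * 4 ^ d * 4) := by
      rw [pow_add, pow_add]; ring
    rw [he, Nat.add_mul_div_left _ _ h4, Nat.add_mul_mod_self_right]
  · have he : c * 4 ^ j = 4 ^ j * c := by ring
    rw [if_pos rfl, he, Nat.add_mul_div_left _ _ (pow_pos (by norm_num) j)]
    omega
  · rw [if_neg (by omega)]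
    obtain ⟨d, rfl⟩ : ∃ d, j = i + 1 + d := ⟨j - i - 1, by omega⟩
    have hpos : (0:ℕ) < 4 ^ i := pow_pos (by norm_num) i
    have hposS : (0:ℕ) < 4 ^ (i+1) := pow_pos (by norm_num) _
    have hr : s % 4 ^ (i + 1) < 4 ^ i := by
      have h1 : s % (4 ^ i * 4) / 4 ^ i = s / 4 ^ i % 4 := Nat.mod_mul_right_div_self s _ _
      rw [h0] at h1
      rw [pow_succ]
      exact (Nat.div_eq_zero_iff.1 h1).resolve_left hpos.ne'
    have hcb : c * 4 ^ i ≤ 3 * 4 ^ i := Nat.mul_le_mul_right _ (by omega)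
    have hps : (4:ℕ) ^ (i + 1) = 4 ^ i * 4 := pow_succ 4 i
    have e2 : s % 4 ^ (i + 1) + c * 4 ^ i < 4 ^ (i + 1) := by omega
    have hdm := Nat.div_add_mod s (4 ^ (i + 1))
    have ediv : (s + c * 4 ^ i) / 4 ^ (i + 1) = s / 4 ^ (i + 1) := by
      have e1 : s + c * 4 ^ i = 4 ^ (i+1) * (s / 4 ^ (i + 1)) + (s % 4 ^ (i + 1) + c * 4 ^ i) := by
        omega
      rw [e1, Nat.mul_add_div hposS, Nat.div_eq_of_lt e2]
      omega
    have hsplit : ∀ x : ℕ, x / 4 ^ (i + 1 + d) = x / 4 ^ (i + 1) / 4 ^ d := by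
      intro x
      rw [Nat.div_div_eq_div_mul, ← pow_add]
    rw [hsplit, hsplit, ediv]

theorem wget_wapp {s c : ℕ} (i j : ℕ) (h0 : wget s i = 0) (hc : c < 4) :
    wget (wapp s i c) j = if j = i then c else wget s j := digit_add i j h0 hc

def nbrHas (s i c : ℕ) : Bool :=
  (decide (i / 9 < 3) && (wget s (i + 9) == c)) || (decide (0 < i / 9) && (wget s (i - 9) == c)) ||
    (decide (i % 9 < 8) && (wget s (i + 1) == c)) || (decide (0 < i % 9) && (wget s (i - 1) == c))

def validB (s i c : ℕ) : Bool := (wget s i == 0) && !(nbrHas s i c)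

def deadAt (k s i : ℕ) : Bool :=
  decide (i < 36) && (wget s i == 0) && (List.range k).all (fun cc => nbrHas s i (cc + 1))

def deadNear (k s last : ℕ) : Bool :=
  (decide (last / 9 < 3) && deadAt k s (last + 9)) || (decide (0 < last / 9) && deadAt k s (last - 9)) ||
    (decide (last % 9 < 8) && deadAt k s (last + 1)) || (decide (0 < last % 9) && deadAt k s (last - 1))

def hasEmpty (s : ℕ) : Bool := (List.range 36).any (fun i => wget s i == 0)

def runGame (k : ℕ) (strat : ℕ → ℕ → ℕ → List (ℕ × ℕ × ℕ)) : ℕ → ℕ → ℕ → ℕ → Bool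
  | 0, s, _, last => deadNear k s last
  | (f+1), s, m, last =>
    if (f+1) % 2 == 1 then
      (strat (f+1) s m).any (fun t =>
        decide (t.1 < 36) && decide (t.1 % 9 ≤ 7) && decide (1 ≤ t.2.1) && decide (t.2.1 ≤ k) &&
          validB s t.1 t.2.1 && runGame k strat f (wapp s t.1 t.2.1) t.2.2 t.1) ||
        deadNear k s last
    else
      hasEmpty s && runGame k strat f s m 36 &&
        (List.range 36).all (fun i => (List.range k).all (fun cc =>
          !(validB s i (cc+1)) || runGame k strat f (wapp s i (cc+1)) m i))

end Window
section Bridge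

/-- `j` is a window-neighbour index of `i` -/
def wnbr (j i : ℕ) : Prop :=
  (i / 9 < 3 ∧ j = i + 9) ∨ (0 < i / 9 ∧ j = i - 9) ∨
    (i % 9 < 8 ∧ j = i + 1) ∨ (0 < i % 9 ∧ j = i - 1)

instance wnbr.decidable (j i : ℕ) : Decidable (wnbr j i) := by
  unfold wnbr; infer_instance

theorem nbrHas_iff {s i c : ℕ} : nbrHas s i c = true ↔ ∃ j, wnbr j i ∧ wget s j = c := by
  unfold nbrHas wnbr
  simp only [Bool.or_eq_true, Bool.and_eq_true, decide_eq_true_eq, beq_iff_eq]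
  constructor
  · rintro (((⟨h1, h2⟩ | ⟨h1, h2⟩) | ⟨h1, h2⟩) | ⟨h1, h2⟩)
    · exact ⟨i + 9, Or.inl ⟨h1, rfl⟩, h2⟩
    · exact ⟨i - 9, Or.inr (Or.inl ⟨h1, rfl⟩), h2⟩
    · exact ⟨i + 1, Or.inr (Or.inr (Or.inl ⟨h1, rfl⟩)), h2⟩
    · exact ⟨i - 1, Or.inr (Or.inr (Or.inr ⟨h1, rfl⟩)), h2⟩
  · rintro ⟨j, (⟨h1, rfl⟩ | ⟨h1, rfl⟩ | ⟨h1, rfl⟩ | ⟨h1, rfl⟩), h2⟩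
    · exact Or.inl (Or.inl (Or.inl ⟨h1, h2⟩))
    · exact Or.inl (Or.inl (Or.inr ⟨h1, h2⟩))
    · exact Or.inl (Or.inr ⟨h1, h2⟩)
    · exact Or.inr ⟨h1, h2⟩

theorem validB_iff {s i c : ℕ} :
    validB s i c = true ↔ wget s i = 0 ∧ ∀ j, wnbr j i → wget s j ≠ c := by
  unfold validB
  simp only [Bool.and_eq_true, beq_iff_eq, Bool.not_eq_true', ← Bool.not_eq_true, and_congr_right_iff]
  intro _
  rw [not_iff_not.2 nbrHas_iff]
  push_neg
  rfl

theorem deadAt_iff {k s i : ℕ} :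
    deadAt k s i = true ↔ i < 36 ∧ wget s i = 0 ∧ ∀ cc, cc < k → ∃ j, wnbr j i ∧ wget s j = cc + 1 := by
  unfold deadAt
  simp only [Bool.and_eq_true, beq_iff_eq, decide_eq_true_eq, List.all_eq_true, List.mem_range,
    and_assoc]
  constructor
  · rintro ⟨h1, h2, h3⟩
    exact ⟨h1, h2, fun cc hcc => nbrHas_iff.1 (h3 cc hcc)⟩
  · rintro ⟨h1, h2, h3⟩
    exact ⟨h1, h2, fun cc hcc => nbrHas_iff.2 (h3 cc hcc)⟩

theorem deadNear_ex {k s last : ℕ} (h : deadNear k s last = true) : ∃ i, deadAt k s i = true := by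
  unfold deadNear at h
  simp only [Bool.or_eq_true, Bool.and_eq_true] at h
  rcases h with ((⟨_, h⟩ | ⟨_, h⟩) | ⟨_, h⟩) | ⟨_, h⟩ <;> exact ⟨_, h⟩

theorem hasEmpty_ex {s : ℕ} (h : hasEmpty s = true) : ∃ i, i < 36 ∧ wget s i = 0 := by
  unfold hasEmpty at h
  simp only [List.any_eq_true, List.mem_range, beq_iff_eq] at h
  exact h

/-- index of a window cell -/
def widx (w : Fin 4 × Fin 9) : ℕ := w.1.val * 9 + w.2.val

theorem widx_lt (w : Fin 4 × Fin 9) : widx w < 36 := by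
  rcases w with ⟨a, b⟩
  have := a.isLt
  have := b.isLt
  unfold widx
  omega

def wcell (j : ℕ) (h : j < 36) : Fin 4 × Fin 9 := (⟨j / 9, by omega⟩, ⟨j % 9, by omega⟩)

theorem widx_wcell (j : ℕ) (h : j < 36) : widx (wcell j h) = j := by
  unfold widx wcell
  simp only
  omega

/-- window adjacency on cells -/
def wadjP (w' w : Fin 4 × Fin 9) : Prop :=
  (w'.1 = w.1 ∧ (w'.2.val + 1 = w.2.val ∨ w.2.val + 1 = w'.2.val)) ∨
    (w'.2 = w.2 ∧ (w'.1.val + 1 = w.1.val ∨ w.1.val + 1 = w'.1.val))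

instance wadjP.decidable (w' w : Fin 4 × Fin 9) : Decidable (wadjP w' w) := by
  unfold wadjP; infer_instance

theorem wnbr_iff_wadjP : ∀ w w' : Fin 4 × Fin 9, wnbr (widx w') (widx w) ↔ wadjP w' w := by decide

theorem wnbr_lt36 {i j : ℕ} (hi : i < 36) (h : wnbr j i) : j < 36 := by
  unfold wnbr at h
  omega

theorem widx_inj : ∀ w w' : Fin 4 × Fin 9, widx w = widx w' → w = w' := by decide

variable {n : ℕ}

/-- embedding of window cells in the `4 × n` grid -/
def emb (hn : 9 ≤ n) (w : Fin 4 × Fin 9) : Fin 4 × Fin n :=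
  (w.1, ⟨w.2.val, lt_of_lt_of_le w.2.isLt hn⟩)

theorem emb_inj (hn : 9 ≤ n) {w w' : Fin 4 × Fin 9} (h : emb hn w = emb hn w') : w = w' := by
  have h1 := congrArg Prod.fst h
  have h2 := congrArg (fun p : Fin 4 × Fin n => (p.2 : ℕ)) h
  simp only [emb] at h1 h2
  exact Prod.ext h1 (Fin.ext h2)

theorem wadjP_adj (hn : 9 ≤ n) {w' w : Fin 4 × Fin 9} (h : wadjP w' w) :
    (pathGraph 4 □ pathGraph n).Adj (emb hn w') (emb hn w) := by
  rcases h with ⟨h1, h2⟩ | ⟨h1, h2⟩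
  · exact boxProd_adj.2 (Or.inr ⟨pathGraph_adj.2 (by simpa [emb] using h2), by simp [emb, h1]⟩)
  · refine boxProd_adj.2 (Or.inl ⟨pathGraph_adj.2 (by simpa [emb] using h2), ?_⟩)
    simp only [emb]
    exact Fin.ext (show ((w'.2 : ℕ)) = (w.2 : ℕ) from congrArg Fin.val h1)

theorem adj_emb (hn : 9 ≤ n) {w : Fin 4 × Fin 9} (hw : w.2.val ≤ 7) {u : Fin 4 × Fin n}
    (h : (pathGraph 4 □ pathGraph n).Adj u (emb hn w)) :
    ∃ w', u = emb hn w' ∧ wadjP w' w := by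
  rcases boxProd_adj.1 h with ⟨ha, hb⟩ | ⟨ha, hb⟩
  · -- vertical
    refine ⟨(u.1, w.2), ?_, Or.inr ⟨rfl, ?_⟩⟩
    · exact Prod.ext rfl (by rw [show ((emb hn (u.1, w.2)).2 : Fin n) = (emb hn w).2 from rfl, ← hb])
    · have := pathGraph_adj.1 ha
      simpa [emb] using this
  · -- horizontal
    have hval := pathGraph_adj.1 ha
    simp only [emb] at hval
    have hu2 : u.2.val < 9 := by omega
    refine ⟨(w.1, ⟨u.2.val, hu2⟩), ?_, Or.inl ⟨rfl, by simpa using (by omega : u.2.val + 1 = w.2.val ∨ w.2.val + 1 = u.2.val)⟩⟩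
    refine Prod.ext (by simpa [emb] using hb) (Fin.ext (by simp [emb]))

/-- decoding a digit into an optional color -/
def decodeW (k d : ℕ) : Option (Fin k) :=
  if h : 0 < d ∧ d - 1 < k then some ⟨d - 1, h.2⟩ else none

theorem decodeW_zero (k : ℕ) : decodeW k 0 = none := by simp [decodeW]

theorem decodeW_eq_none {k d : ℕ} (hd : d ≤ k) : decodeW k d = none ↔ d = 0 := by
  unfold decodeW
  split
  · rename_i h
    constructor
    · intro hh; exact nomatch hh
    · intro hh; omega
  · rename_i h
    have hd0 : d = 0 := by
      rcases Nat.eq_zero_or_pos d with h' | h'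
      · exact h'
      · exact absurd ⟨h', by omega⟩ h
    simp [hd0]

theorem decodeW_succ {k cc : ℕ} (hcc : cc < k) : decodeW k (cc + 1) = some ⟨cc, hcc⟩ := by
  unfold decodeW
  rw [dif_pos ⟨Nat.succ_pos _, by omega⟩]
  exact congrArg some (Fin.ext (by simp))

/-- the coupling between the real coloring and the window state -/
def couples (hn : 9 ≤ n) {k : ℕ} (c : Fin 4 × Fin n → Option (Fin k)) (s : ℕ) : Prop :=
  ∀ w : Fin 4 × Fin 9, c (emb hn w) = decodeW k (wget s (widx w)) ∧ wget s (widx w) ≤ k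

theorem couples_empty (hn : 9 ≤ n) (k : ℕ) :
    couples hn (fun _ : Fin 4 × Fin n => (none : Option (Fin k))) 0 := by
  intro w
  have : wget 0 (widx w) = 0 := by unfold wget; simp
  rw [this, decodeW_zero]
  exact ⟨rfl, by omega⟩

theorem couples_step (hn : 9 ≤ n) {k : ℕ} {c : Fin 4 × Fin n → Option (Fin k)} {s : ℕ}
    (hk : k ≤ 3) (hc : couples hn c s) (w : Fin 4 × Fin 9) (colv : ℕ) (h1 : 1 ≤ colv) (h2 : colv ≤ k)
    (h0 : wget s (widx w) = 0) (col : Fin k) (hcol : (col : ℕ) = colv - 1) :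
    couples hn (Function.update c (emb hn w) (some col)) (wapp s (widx w) colv) := by
  intro w''
  have hup := wget_wapp (c := colv) (widx w) (widx w'') h0 (by omega)
  by_cases hw : w'' = w
  · subst hw
    rw [hup, if_pos rfl, Function.update_self]
    refine ⟨?_, h2⟩
    have hlt : colv - 1 < k := by omega
    have : decodeW k colv = some (⟨colv - 1, hlt⟩ : Fin k) := by
      unfold decodeW
      rw [dif_pos ⟨by omega, hlt⟩]
    rw [this]
    exact congrArg some (Fin.ext (by simp [hcol])).symm
  · have hii : widx w'' ≠ widx w := fun h => hw (widx_inj _ _ h)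
    have hee : emb hn w'' ≠ emb hn w := fun h => hw (emb_inj hn h)
    rw [hup, if_neg hii, Function.update_of_ne hee]
    exact hc w''

theorem dead_bridge (hn : 9 ≤ n) {k s : ℕ} {c : Fin 4 × Fin n → Option (Fin k)}
    (hc : couples hn c s) {i : ℕ} (hd : deadAt k s i = true) (t : Bool) :
    BobWins (pathGraph 4 □ pathGraph n) k t c := by
  obtain ⟨hi, h0, hwit⟩ := deadAt_iff.1 hd
  set w := wcell i hi with hwdef
  have hiw : widx w = i := widx_wcell i hi
  refine bobWins_of_dead (uncard c) t c le_rfl (emb hn w) ?_ ?_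
  · rw [(hc w).1, hiw, h0, decodeW_zero]
  · intro col
    obtain ⟨j, hj1, hj2⟩ := hwit col.val col.isLt
    rw [← hiw] at hj1
    have hjlt : j < 36 := wnbr_lt36 (by omega) hj1
    set w' := wcell j hjlt with hw'def
    have hjw : widx w' = j := widx_wcell j hjlt
    rw [← hjw] at hj1 hj2
    refine ⟨emb hn w', wadjP_adj hn ((wnbr_iff_wadjP w w').1 hj1), ?_⟩
    rw [(hc w').1, hj2, decodeW_succ col.isLt]

theorem bridge (hn : 9 ≤ n) (k : ℕ) (hk : k ≤ 3) (strat : ℕ → ℕ → ℕ → List (ℕ × ℕ × ℕ)) :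
    ∀ (f s m last : ℕ) (c : Fin 4 × Fin n → Option (Fin k)) (t : Bool),
      couples hn c s → runGame k strat f s m last = true →
      (f % 2 = 0 → t = true) → (f % 2 = 1 → t = false) →
      BobWins (pathGraph 4 □ pathGraph n) k t c := by
  intro f
  induction f with
  | zero =>
    intro s m last c t hc hrun _ _
    obtain ⟨i, hd⟩ := deadNear_ex hrun
    exact dead_bridge hn hc hd t
  | succ f ih =>
    intro s m last c t hc hrun hte hto
    by_cases hpar : (f + 1) % 2 = 1
    · -- Bob to move
      have ht : t = false := hto hpar
      subst ht
      rw [runGame, if_pos (by simpa using hpar)] at hrun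
      rw [Bool.or_eq_true] at hrun
      rcases hrun with hrun | hrun
      · obtain ⟨⟨i, colv, m'⟩, _, hcond⟩ := List.any_eq_true.1 hrun
        simp only [Bool.and_eq_true, decide_eq_true_eq] at hcond
        obtain ⟨⟨⟨⟨⟨hi36, hi7⟩, hc1⟩, hck⟩, hvb⟩, hrun'⟩ := hcond
        obtain ⟨h0, hnb⟩ := validB_iff.1 hvb
        set w := wcell i hi36 with hwdef
        have hiw : widx w = i := widx_wcell i hi36
        have hw7 : w.2.val ≤ 7 := by
          have : w.2.val = i % 9 := rfl
          omega
        set col : Fin k := ⟨colv - 1, by omega⟩ with hcoldef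
        have hvalid : validMove (pathGraph 4 □ pathGraph n) c (emb hn w) col := by
          constructor
          · rw [(hc w).1, hiw, h0, decodeW_zero]
          · intro u hu
            obtain ⟨w', rfl, hadj⟩ := adj_emb hn hw7 hu
            have hj1 : wnbr (widx w') (widx w) := (wnbr_iff_wadjP w w').2 hadj
            rw [hiw] at hj1
            have hne := hnb _ hj1
            rw [(hc w').1]
            intro hcontra
            have hle := (hc w').2
            rcases Nat.eq_zero_or_pos (wget s (widx w')) with hz | hp
            · rw [hz, decodeW_zero] at hcontra
              exact nomatch hcontra
            · have : wget s (widx w') = (wget s (widx w') - 1) + 1 := by omega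
              rw [this, decodeW_succ (by omega)] at hcontra
              have := congrArg Fin.val (Option.some_inj.1 hcontra)
              simp only [hcoldef] at this
              omega
        refine BobWins.bobMove c (emb hn w) col hvalid ?_
        have hstep := couples_step hn hk hc w colv hc1 hck (by rwa [hiw]) col rfl
        rw [hiw] at hstep
        exact ih (wapp s i colv) m' i _ true hstep hrun' (fun _ => rfl) (fun hf => by omega)
      · obtain ⟨i, hd⟩ := deadNear_ex hrun
        exact dead_bridge hn hc hd false
    · -- Alice to move
      have hpar0 : (f + 1) % 2 = 0 := by omega
      have ht : t = true := hte hpar0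
      subst ht
      rw [runGame, if_neg (by simpa using hpar)] at hrun
      rw [Bool.and_eq_true, Bool.and_eq_true] at hrun
      obtain ⟨⟨hemp, hpass⟩, hall⟩ := hrun
      refine BobWins.aliceTurn c ?_ ?_
      · obtain ⟨i, hi, h0⟩ := hasEmpty_ex hemp
        intro hallc
        refine hallc (emb hn (wcell i hi)) ?_
        rw [(hc _).1, widx_wcell i hi, h0, decodeW_zero]
      · intro v col hm
        by_cases hv9 : v.2.val < 9
        · set w : Fin 4 × Fin 9 := (v.1, ⟨v.2.val, hv9⟩) with hwdef
          have hvw : v = emb hn w := Prod.ext rfl (Fin.ext rfl)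
          have h0 : wget s (widx w) = 0 := by
            have h1 := (hc w).1
            rw [← hvw, hm.1] at h1
            exact ((decodeW_eq_none (hc w).2).1 h1.symm)
          have hvb : validB s (widx w) (col.val + 1) = true := by
            refine validB_iff.2 ⟨h0, fun j hj => ?_⟩
            have hjlt : j < 36 := wnbr_lt36 (widx_lt w) hj
            have hjw : widx (wcell j hjlt) = j := widx_wcell j hjlt
            rw [← hjw] at hj
            have hadj := wadjP_adj hn ((wnbr_iff_wadjP w _).1 hj)
            rw [← hvw] at hadj
            have hne := hm.2 _ hadj
            rw [(hc _).1, hjw] at hne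
            intro hcontra
            rw [hcontra, decodeW_succ col.isLt] at hne
            exact hne (by rw [Fin.eta])
          have hrun' : runGame k strat f (wapp s (widx w) (col.val + 1)) m (widx w) = true := by
            have h1 := List.all_eq_true.1 hall (widx w) (List.mem_range.2 (widx_lt w))
            have h2 := List.all_eq_true.1 h1 col.val (List.mem_range.2 col.isLt)
            rw [Bool.or_eq_true, Bool.not_eq_true'] at h2
            rcases h2 with h2 | h2
            · rw [hvb] at h2; exact Bool.noConfusion h2
            · exact h2
          have hcpl := couples_step hn hk hc w (col.val + 1) (by omega) (by omega) h0 col (by omega)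
          rw [← hvw] at hcpl
          exact ih _ m (widx w) _ false hcpl hrun' (fun hf => by omega) (fun _ => rfl)
        · have hne : ∀ w : Fin 4 × Fin 9, emb hn w ≠ v := by
            intro w hw
            have : v.2.val = w.2.val := by rw [← hw]; rfl
            have := w.2.isLt
            omega
          have hcpl : couples hn (Function.update c v (some col)) s := by
            intro w
            rw [Function.update_of_ne (hne w)]
            exact hc w
          exact ih s m 36 _ false hcpl hpass (fun hf => by omega) (fun _ => rfl)

end Bridge
section Tables

def k3tab : List (ℕ × ℕ × ℕ × ℕ) := [(999,12,2,31507),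
  (1,10,2,2891),
  (2,10,1,2891),
  (3,10,1,18954),
  (5,11,2,3879),
  (6,11,1,3879),
  (7,11,1,3622),
  (9,10,2,21251),
  (10,4,3,14897),
  (11,4,2,15153),
  (13,4,2,5651251),
  (14,5,1,1600272951),
  (15,5,1,2203990838),
  (17,12,2,2939),
  (18,2,3,15153),
  (19,2,2,14897),
  (21,3,2,1600272951),
  (22,3,1,2052534839),
  (23,3,1,2069246774),
  (25,12,2,31507),
  (26,4,3,12857),
  (27,4,2,13113),
  (29,12,2,31507),
  (30,12,2,31507),
  (31,12,2,31507),
  (33,12,2,31507),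
  (34,12,2,31507),
  (35,12,2,31507),
  (37,12,2,31507),
  (38,12,2,31507),
  (39,12,2,31507),
  (41,0,2,2891),
  (42,0,1,2891),
  (43,0,1,18954),
  (45,1,2,3879),
  (46,1,1,3879),
  (47,1,1,3622),
  (49,2,2,21267),
  (50,1,1,31507),
  (51,1,1,31250),
  (54,3,1,5975),
  (55,3,1,5718),
  (57,4,2,13083),
  (58,3,1,33555),
  (59,3,1,25106),
  (61,4,2,6173499),
  (62,4,2,1389371),
  (63,4,3,1389114),
  (65,12,2,31507),
  (66,12,2,31507),
  (67,12,2,31507),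
  (69,12,2,31507),
  (70,12,2,31507),
  (71,12,2,31507),
  (73,10,2,29443),
  (74,10,1,29443),
  (75,10,1,29186),
  (77,9,2,1903),
  (78,9,1,1903),
  (79,9,1,1646),
  (81,10,2,13171),
  (82,2,1,11131),
  (83,2,1,10874),
  (86,3,1,3813175),
  (87,3,1,1257014),
  (94,4,2,4010811),
  (95,4,3,4010554),
  (97,12,2,31507),
  (98,4,2,13187),
  (99,4,2,13114),
  (101,12,2,31507),
  (102,12,2,31507),
  (103,12,2,31507),
  (105,12,2,31507),
  (106,12,2,31507),
  (107,12,2,31507),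
  (109,12,2,31507),
  (110,12,2,31507),
  (111,12,2,31507),
  (113,12,2,31507),
  (114,12,2,31507),
  (115,12,2,4987),
  (117,11,2,8015703),
  (118,11,1,3297111),
  (119,11,1,3362390),
  (121,12,2,21267),
  (122,3,1,33587),
  (123,3,1,33330),
  (126,12,2,4987),
  (127,12,2,21267),
  (129,12,2,31507),
  (130,3,1,25467),
  (131,3,1,25210),
  (133,12,2,31507),
  (134,12,2,31507),
  (135,12,2,31507),
  (137,12,2,31507),
  (138,12,2,31507),
  (139,12,2,31507),
  (141,12,2,31507),
  (142,12,2,31507),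
  (143,12,2,31507)]

def k2tab : List (ℕ × ℕ × ℕ × ℕ) := [(999,4,2,0),
  (1,2,2,0),
  (2,2,1,0),
  (5,3,2,0),
  (6,3,1,0),
  (9,0,2,0),
  (10,0,1,0),
  (13,1,2,0),
  (14,1,1,0),
  (17,2,2,0),
  (21,3,2,0),
  (22,3,1,0),
  (25,4,2,0),
  (26,4,1,0),
  (29,4,2,0),
  (30,4,2,0),
  (33,4,2,0),
  (34,4,2,0),
  (37,1,2,0),
  (38,1,1,0),
  (41,0,2,0),
  (42,0,1,0),
  (45,1,2,0),
  (46,1,1,0),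
  (49,2,2,0),
  (54,3,1,0),
  (57,4,2,0),
  (61,4,2,0),
  (62,4,2,0),
  (65,4,2,0),
  (66,4,2,0),
  (69,4,2,0),
  (70,4,2,0),
  (73,0,2,0),
  (74,0,1,0),
  (77,1,2,0),
  (78,1,1,0),
  (81,2,2,0),
  (86,3,1,0),
  (94,4,2,0),
  (97,4,2,0),
  (101,4,2,0),
  (102,4,2,0),
  (105,4,2,0),
  (106,4,2,0),
  (109,4,2,0),
  (110,4,2,0),
  (113,4,2,0),
  (114,4,2,0),
  (117,4,2,0),
  (118,4,2,0),
  (121,4,2,0),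
  (126,4,2,0),
  (129,4,2,0),
  (133,4,2,0),
  (134,4,2,0),
  (137,4,2,0),
  (138,4,2,0),
  (141,4,2,0),
  (142,4,2,0)]

def a1code (s : ℕ) : ℕ :=
  ((List.range 36).findSome? (fun i =>
    if i ≠ 22 ∧ wget s i ≠ 0 then some (i * 4 + wget s i) else none)).getD 999

def lookupTab (tab : List (ℕ × ℕ × ℕ × ℕ)) (key : ℕ) : List (ℕ × ℕ × ℕ) :=
  tab.filterMap (fun e => if e.1 = key then some (e.2.1, e.2.2.1, e.2.2.2) else none)

def decMem (m : ℕ) : List (ℕ × ℕ × ℕ) :=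
  (List.range 4).filterMap (fun t =>
    let cd := m / 256 ^ t % 256
    if cd = 0 then none else some (cd / 4, cd % 4, 0))

def strat3 : ℕ → ℕ → ℕ → List (ℕ × ℕ × ℕ) := fun f s m =>
  if f = 5 then [(22, 1, 0)]
  else if f = 3 then lookupTab k3tab (a1code s)
  else if f = 1 then decMem m else []

def strat2 : ℕ → ℕ → ℕ → List (ℕ × ℕ × ℕ) := fun f s _ =>
  if f = 3 then [(22, 1, 0)]
  else if f = 1 then lookupTab k2tab (a1code s) else []

def strat1 : ℕ → ℕ → ℕ → List (ℕ × ℕ × ℕ) := fun f _ _ =>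
  if f = 1 then [(22, 1, 0)] else []

end Tables

section Final

set_option maxHeartbeats 100000000 in
theorem run3_true : runGame 3 strat3 5 0 0 36 = true := by decide

set_option maxHeartbeats 10000000 in
theorem run2_true : runGame 2 strat2 3 0 0 36 = true := by decide

set_option maxHeartbeats 1000000 in
theorem run1_true : runGame 1 strat1 1 0 0 36 = true := by decide

variable {n : ℕ}

theorem bobWins_three (hn : 9 ≤ n) :
    BobWins (pathGraph 4 □ pathGraph n) 3 false (fun _ => none) :=
  bridge hn 3 (by omega) strat3 5 0 0 36 _ false (couples_empty hn 3) run3_true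
    (fun h => by omega) (fun _ => rfl)

theorem bobWins_two (hn : 9 ≤ n) :
    BobWins (pathGraph 4 □ pathGraph n) 2 false (fun _ => none) :=
  bridge hn 2 (by omega) strat2 3 0 0 36 _ false (couples_empty hn 2) run2_true
    (fun h => by omega) (fun _ => rfl)

theorem bobWins_one (hn : 9 ≤ n) :
    BobWins (pathGraph 4 □ pathGraph n) 1 false (fun _ => none) :=
  bridge hn 1 (by omega) strat1 1 0 0 36 _ false (couples_empty hn 1) run1_true
    (fun h => by omega) (fun _ => rfl)

theorem bobWins_zero (hn : 9 ≤ n) :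
    BobWins (pathGraph 4 □ pathGraph n) 0 false (fun _ => none) :=
  bobWins_of_dead (uncard (fun _ : Fin 4 × Fin n => (none : Option (Fin 0)))) false _ le_rfl
    ((0 : Fin 4), (⟨0, by omega⟩ : Fin n)) rfl (fun col => col.elim0)

end Final

/-- The game chromatic number: the least `k` such that Alice has a winning strategy
in the `k`-coloring game on `G` (Alice moves first), starting from the empty coloring. -/
noncomputable def gameChromaticNumber {V : Type*} [DecidableEq V] (G : SimpleGraph V) : ℕ :=
  sInf {k | AliceWins G k true (fun _ => none)}

/-- The Bob-start game chromatic number: the least `k` such that Alice has a winning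
strategy in the `k`-coloring game on `G` in which Bob moves first. -/
noncomputable def bobStartGameChromaticNumber {V : Type*} [DecidableEq V]
    (G : SimpleGraph V) : ℕ :=
  sInf {k | AliceWins G k false (fun _ => none)}

/-- For every `n ≥ 9`, the Bob-start game chromatic number of the `4 × n` grid
graph `P₄ □ Pₙ` is exactly `4`. -/
theorem bobStartGameChromaticNumber_grid_eq_four (n : ℕ) (hn : 9 ≤ n) :
    bobStartGameChromaticNumber (pathGraph 4 □ pathGraph n) = 4 := by
  unfold bobStartGameChromaticNumber
  have hmem : 4 ∈ {k | AliceWins (pathGraph 4 □ pathGraph n) k false (fun _ => none)} :=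
    aliceWins_four
  refine le_antisymm (Nat.sInf_le hmem) (le_csInf ⟨4, hmem⟩ ?_)
  intro b hb
  by_contra hlt
  push_neg at hlt
  interval_cases b
  · exact (bobWins_zero hn).not_aliceWins hb
  · exact (bobWins_one hn).not_aliceWins hb
  · exact (bobWins_two hn).not_aliceWins hb
  · exact (bobWins_three hn).not_aliceWins hb
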